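/- Let 0 < m < k be real numbers, and define H_r(t) = ∫_t^∞ h_r(τ) dτ with h_r(s) = e^{-s} for s ≥ 0 and h_r(s) = (1-s)^{r-1} for s ≤ 0. Then there exists a constant C (depending only on m, k) such that H_m(s+t) ≤ C · H_k(s) · (1+t)^{m-k} for all s ∈ ℝ and all t ≥ 0. -/

import Mathlib

open MeasureTheory

/-- The kernel `h_r`. -/
noncomputable def hker (r : ℝ) (s : ℝ) : ℝ :=
  if 0 ≤ s then Real.exp (-s) else (1 - s) ^ (r - 1)

/-- The tail integral `H_r`. -/
noncomputable def Hker (r : ℝ) (t : ℝ) : ℝ := ∫ τ in Set.Ioi t, hker r τ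

open Set

lemma Hker_eq_of_nonneg (r : ℝ) {t : ℝ} (ht : 0 ≤ t) : Hker r t = Real.exp (-t) := by
  rw [Hker, setIntegral_congr_fun (measurableSet_Ioi)
    (g := fun τ => Real.exp (-τ)) (fun τ hτ => by
      simp only [hker, if_pos (le_of_lt (lt_of_le_of_lt ht hτ))]),
    integral_exp_neg_Ioi]

lemma Hker_eq_of_nonpos (r : ℝ) (hr : 0 < r) {t : ℝ} (ht : t ≤ 0) :
    Hker r t = ((1 - t) ^ r - 1) / r + 1 := by
  have hsplit : Set.Ioi t = Set.Ioc t 0 ∪ Set.Ioi 0 := (Ioc_union_Ioi_eq_Ioi ht).symm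
  have hint1 : IntegrableOn (hker r) (Set.Ioc t 0) := by
    have : EqOn (hker r) (fun τ => (1 - τ) ^ (r - 1)) (Set.Ioc t 0) := by
      intro τ hτ
      rcases eq_or_lt_of_le hτ.2 with h | h
      · simp [hker, h, Real.rpow_natCast]
      · simp [hker, not_le.mpr h]
    refine IntegrableOn.congr_fun ?_ this.symm measurableSet_Ioc
    have : IntervalIntegrable (fun τ : ℝ => (1 - τ) ^ (r - 1)) volume t 0 := by
      apply ContinuousOn.intervalIntegrable
      apply ContinuousOn.rpow_const
      · fun_prop
      · intro x hx
        left
        have hx0 : x ≤ 0 := by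
          simp [Set.uIcc_of_le ht] at hx
          linarith [hx.2]
        have : (0:ℝ) < 1 - x := by linarith
        exact ne_of_gt this
    rw [intervalIntegrable_iff_integrableOn_Ioc_of_le ht] at this
    exact this
  have hint2 : IntegrableOn (hker r) (Set.Ioi 0) := by
    have : EqOn (hker r) (fun τ => Real.exp (-1 * τ)) (Set.Ioi 0) := by
      intro τ hτ; simp [hker, le_of_lt (Set.mem_Ioi.mp hτ)]
    exact IntegrableOn.congr_fun (exp_neg_integrableOn_Ioi 0 one_pos) this.symm measurableSet_Ioi
  rw [Hker, hsplit, setIntegral_union (Ioc_disjoint_Ioi le_rfl) measurableSet_Ioi hint1 hint2]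
  have h1 : ∫ τ in Set.Ioc t 0, hker r τ = ((1 - t) ^ r - 1) / r := by
    rw [setIntegral_congr_fun measurableSet_Ioc
      (g := fun τ => (1 - τ) ^ (r - 1)) (fun τ hτ => by
        rcases eq_or_lt_of_le hτ.2 with h | h
        · simp [hker, h]
        · simp [hker, not_le.mpr h])]
    rw [← intervalIntegral.integral_of_le ht]
    rw [intervalIntegral.integral_comp_sub_left (fun u => u ^ (r - 1)) 1]
    rw [integral_rpow (Or.inl (by linarith))]
    rw [sub_add_cancel]
    norm_num [Real.one_rpow]
  have h2 : ∫ τ in Set.Ioi (0:ℝ), hker r τ = 1 := by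
    rw [setIntegral_congr_fun measurableSet_Ioi
      (g := fun τ => Real.exp (-τ)) (fun τ hτ => by simp [hker, le_of_lt (Set.mem_Ioi.mp hτ)]),
      integral_exp_neg_Ioi]
    simp
  rw [h1, h2]

lemma rpow_le_const_mul_exp {a : ℝ} (ha : 0 ≤ a) {u : ℝ} (hu : 0 ≤ u) :
    (1 + u) ^ a ≤ max 1 (a ^ a) * Real.exp u := by
  have h1u : (1:ℝ) ≤ 1 + u := by linarith
  rcases le_or_gt a 1 with h | h
  · calc (1 + u) ^ a ≤ (1 + u) ^ (1:ℝ) := Real.rpow_le_rpow_of_exponent_le h1u h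
    _ = 1 + u := Real.rpow_one _
    _ ≤ Real.exp u := by linarith [Real.add_one_le_exp u]
    _ ≤ max 1 (a ^ a) * Real.exp u := by
        nlinarith [le_max_left 1 (a ^ a), Real.exp_pos u]
  · have ha0 : 0 < a := by linarith
    have key : 1 + u ≤ a * Real.exp (u / a) := by
      have := Real.add_one_le_exp (u / a)
      have h2 : a * (u / a + 1) ≤ a * Real.exp (u / a) := by nlinarith
      have h3 : a * (u / a + 1) = u + a := by field_simp
      linarith
    calc (1 + u) ^ a ≤ (a * Real.exp (u / a)) ^ a :=
          Real.rpow_le_rpow (by linarith) key ha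
    _ = a ^ a * (Real.exp (u / a)) ^ a := Real.mul_rpow ha0.le (Real.exp_pos _).le
    _ = a ^ a * Real.exp u := by rw [← Real.exp_mul, div_mul_cancel₀ _ (ne_of_gt ha0)]
    _ ≤ max 1 (a ^ a) * Real.exp u := by
        nlinarith [le_max_right 1 (a ^ a), Real.exp_pos u]

lemma Hker_lower {k : ℝ} (hk : 0 < k) {s : ℝ} (hs : s ≤ 0) :
    (1 - s) ^ k ≤ max 1 k * Hker k s := by
  rw [Hker_eq_of_nonpos k hk hs]
  set X := (1 - s) ^ k with hX
  have hX1 : 1 ≤ X := Real.one_le_rpow (by linarith) hk.le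
  have heq : (X - 1) / k + 1 = (X - 1 + k) / k := by field_simp
  rcases le_total 1 k with h | h
  · rw [max_eq_right h, heq]
    have : k * ((X - 1 + k) / k) = X - 1 + k := by field_simp
    rw [this]; linarith
  · rw [max_eq_left h, one_mul, heq, le_div_iff₀ hk]
    nlinarith

lemma Hker_upper {m : ℝ} (hm : 0 < m) {u : ℝ} (hu : u ≤ 0) :
    Hker m u ≤ max 1 (1 / m) * (1 - u) ^ m := by
  rw [Hker_eq_of_nonpos m hm hu]
  set Y := (1 - u) ^ m with hY
  have hY1 : 1 ≤ Y := Real.one_le_rpow (by linarith) hm.le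
  have heq : (Y - 1) / m + 1 = (Y - 1 + m) / m := by field_simp
  rcases le_total 1 m with h | h
  · rw [max_eq_left (by rw [div_le_one₀ hm]; exact h), one_mul, heq, div_le_iff₀ hm]
    nlinarith
  · rw [max_eq_right (by rw [le_div_iff₀ hm]; nlinarith), heq, div_le_iff₀ hm]
    have hmm : 1 / m * Y * m = Y := by field_simp
    rw [hmm]; linarith

lemma Hker_pos {k : ℝ} (hk : 0 < k) (s : ℝ) : 0 < Hker k s := by
  rcases le_or_gt 0 s with h | h
  · rw [Hker_eq_of_nonneg k h]; exact Real.exp_pos _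
  · rw [Hker_eq_of_nonpos k hk h.le]
    have : (1:ℝ) ≤ (1 - s) ^ k := Real.one_le_rpow (by linarith) hk.le
    have : 0 ≤ ((1 - s) ^ k - 1) / k := div_nonneg (by linarith) hk.le
    linarith

/-- Interpolation-type decay estimate comparing the tails `H_m` and `H_k`. -/
theorem Hker_tail_comparison (m k : ℝ) (hm : 0 < m) (hmk : m < k) :
    ∃ C : ℝ, 0 < C ∧ ∀ s t : ℝ, 0 ≤ t →
      Hker m (s + t) ≤ C * Hker k s * (1 + t) ^ (m - k) := by
  have hk : 0 < k := hm.trans hmk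
  set a := k - m with ha
  have ha0 : 0 ≤ a := by rw [ha]; linarith
  set C₂ := max 1 (a ^ a) with hC₂
  set K := max 1 k with hK
  set M := max 1 (1 / m) with hM
  have hC₂1 : (1:ℝ) ≤ C₂ := le_max_left _ _
  have hK1 : (1:ℝ) ≤ K := le_max_left _ _
  have hM1 : (1:ℝ) ≤ M := le_max_left _ _
  have hKM : (0:ℝ) ≤ K * M := by nlinarith
  have hCC : C₂ ≤ C₂ * K * M := by
    have h1 : C₂ ≤ C₂ * K := le_mul_of_one_le_right (by linarith) hK1
    have h2 : C₂ * K ≤ C₂ * K * M := le_mul_of_one_le_right (by nlinarith) hM1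
    linarith
  have hC2K : C₂ * K ≤ C₂ * K * M := le_mul_of_one_le_right (by nlinarith) hM1
  have hMK : M * K ≤ C₂ * K * M := by
    have := le_mul_of_one_le_left hKM hC₂1
    nlinarith
  refine ⟨C₂ * K * M, by nlinarith, ?_⟩
  intro s t ht
  have h1t : (0:ℝ) < 1 + t := by linarith
  have hHk : 0 < Hker k s := Hker_pos hk s
  have hrw : m - k = -a := by rw [ha]; ring
  rw [hrw, Real.rpow_neg h1t.le]
  have hpow : 0 < (1 + t) ^ a := Real.rpow_pos_of_pos h1t a
  rw [← div_eq_mul_inv, le_div_iff₀ hpow]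
  by_cases hs : 0 ≤ s
  · -- Case A
    have hst : 0 ≤ s + t := by linarith
    rw [Hker_eq_of_nonneg m hst, Hker_eq_of_nonneg k hs]
    calc Real.exp (-(s + t)) * (1 + t) ^ a
        ≤ Real.exp (-(s + t)) * (C₂ * Real.exp t) := by
          gcongr
          exact rpow_le_const_mul_exp ha0 ht
      _ = C₂ * Real.exp (-s) := by
          have h1 : Real.exp (-(s + t)) * Real.exp t = Real.exp (-s) := by
            rw [← Real.exp_add]; congr 1; ring
          linear_combination C₂ * h1
      _ ≤ C₂ * K * M * Real.exp (-s) :=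
          mul_le_mul_of_nonneg_right hCC (Real.exp_pos _).le
  · push_neg at hs
    have h1s : (1:ℝ) ≤ 1 - s := by linarith
    have h1sp : (0:ℝ) < 1 - s := by linarith
    have hlow : (1 - s) ^ k ≤ K * Hker k s := by
      have := Hker_lower hk hs.le
      rw [← hK] at this; exact this
    have hknn : (0:ℝ) ≤ (1 - s) ^ k := Real.rpow_nonneg h1sp.le k
    by_cases hst : 0 ≤ s + t
    · -- Case B
      rw [Hker_eq_of_nonneg m hst]
      have hbase : 1 + t ≤ (1 - s) * (1 + (s + t)) := by nlinarith
      have hchain : (1 + t) ^ a ≤ (1 - s) ^ k * (C₂ * Real.exp (s + t)) := by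
        calc (1 + t) ^ a ≤ ((1 - s) * (1 + (s + t))) ^ a :=
              Real.rpow_le_rpow h1t.le hbase ha0
          _ = (1 - s) ^ a * (1 + (s + t)) ^ a :=
              Real.mul_rpow (by linarith) (by linarith)
          _ ≤ (1 - s) ^ k * (1 + (s + t)) ^ a :=
              mul_le_mul_of_nonneg_right
                (Real.rpow_le_rpow_of_exponent_le h1s (by rw [ha]; linarith))
                (Real.rpow_nonneg (by linarith) a)
          _ ≤ (1 - s) ^ k * (C₂ * Real.exp (s + t)) :=
              mul_le_mul_of_nonneg_left (rpow_le_const_mul_exp ha0 hst) hknn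
      calc Real.exp (-(s + t)) * (1 + t) ^ a
          ≤ Real.exp (-(s + t)) * ((1 - s) ^ k * (C₂ * Real.exp (s + t))) := by
            gcongr
        _ = C₂ * (1 - s) ^ k := by
            have h1 : Real.exp (-(s + t)) * Real.exp (s + t) = 1 := by
              rw [← Real.exp_add, show -(s + t) + (s + t) = 0 by ring, Real.exp_zero]
            linear_combination C₂ * (1 - s) ^ k * h1
        _ ≤ C₂ * (K * Hker k s) :=
            mul_le_mul_of_nonneg_left hlow (by linarith)
        _ ≤ C₂ * K * M * Hker k s := by
            have := mul_le_mul_of_nonneg_right hC2K hHk.le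
            nlinarith
    · -- Case C
      push_neg at hst
      have hup : Hker m (s + t) ≤ M * (1 - (s + t)) ^ m := by
        have := Hker_upper hm hst.le
        rw [← hM] at this; exact this
      have hts : 1 + t ≤ 1 - s := by linarith
      have hann : (0:ℝ) ≤ (1 - s) ^ a := Real.rpow_nonneg h1sp.le a
      calc Hker m (s + t) * (1 + t) ^ a
          ≤ (M * (1 - (s + t)) ^ m) * (1 - s) ^ a :=
            mul_le_mul hup (Real.rpow_le_rpow h1t.le hts ha0)
              (Real.rpow_nonneg h1t.le a)
              (mul_nonneg (by linarith) (Real.rpow_nonneg (by linarith) m))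
        _ ≤ (M * (1 - s) ^ m) * (1 - s) ^ a :=
            mul_le_mul_of_nonneg_right
              (mul_le_mul_of_nonneg_left
                (Real.rpow_le_rpow (by linarith) (by linarith) hm.le) (by linarith))
              hann
        _ = M * (1 - s) ^ k := by
            rw [mul_assoc, ← Real.rpow_add h1sp, show m + a = k by rw [ha]; ring]
        _ ≤ M * (K * Hker k s) :=
            mul_le_mul_of_nonneg_left hlow (by linarith)
        _ ≤ C₂ * K * M * Hker k s := by
            have := mul_le_mul_of_nonneg_right hMK hHk.le
            nlinarith
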